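/- Let G be a finite group and x, y ∈ G with xy = yx. Let m be the generalized order of y in the centralizer C_G(x), and let n be the generalized order of x^m in G. Then the generalized order of xy in G satisfies e_G(xy) ≤ n·m. -/

import Mathlib

/-- The generalized order of `g`: the smallest positive `k` such that some product of
`k` conjugates of `g` equals the identity. -/
noncomputable def genOrder {G : Type*} [Group G] (g : G) : ℕ :=
  sInf {k | 0 < k ∧ ∃ l : List G, l.length = k ∧ (l.map fun x => x⁻¹ * g * x).prod = 1}

lemma genOrder_spec {G : Type*} [Group G] [Finite G] (g : G) :
    0 < genOrder g ∧ ∃ l : List G, l.length = genOrder g ∧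
      (l.map fun x => x⁻¹ * g * x).prod = 1 := by
  have hne : {k | 0 < k ∧ ∃ l : List G, l.length = k ∧
      (l.map fun x => x⁻¹ * g * x).prod = 1}.Nonempty := by
    refine ⟨orderOf g, orderOf_pos g, List.replicate (orderOf g) 1, by simp, ?_⟩
    simp [List.map_replicate, List.prod_replicate, pow_orderOf_eq_one]
  exact Nat.sInf_mem hne

lemma genOrder_le {G : Type*} [Group G] (g : G) (k : ℕ) (hk : 0 < k)
    (l : List G) (hl : l.length = k) (hp : (l.map fun x => x⁻¹ * g * x).prod = 1) :
    genOrder g ≤ k :=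
  Nat.sInf_le ⟨hk, l, hl, hp⟩

lemma conj_prod_shift {G : Type*} [Group G] (g d : G) (l : List G) :
    (l.map fun a => (a * d)⁻¹ * g * (a * d)).prod
      = d⁻¹ * (l.map fun a => a⁻¹ * g * a).prod * d := by
  induction l with
  | nil => simp
  | cons a l ih =>
    simp only [List.map_cons, List.prod_cons, ih]
    group

lemma prod_conj_mul {G : Type*} [Group G] (x g : G) (l : List G)
    (h : ∀ a ∈ l, (a⁻¹ * g * a) * x = x * (a⁻¹ * g * a))
    (h2 : ∀ a ∈ l, a * x = x * a) :
    (l.map fun a => a⁻¹ * (x * g) * a).prod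
      = x ^ l.length * (l.map fun a => a⁻¹ * g * a).prod := by
  induction l with
  | nil => simp
  | cons a l ih =>
    have hu : (a⁻¹ * g * a) * x = x * (a⁻¹ * g * a) := h a List.mem_cons_self
    have hxp : x ^ l.length * (a⁻¹ * g * a) = (a⁻¹ * g * a) * x ^ l.length :=
      (Commute.pow_left ((hu.symm : Commute x _)) l.length : Commute (x ^ l.length) _)
    have h2a : Commute a x := h2 a List.mem_cons_self
    have hax : a⁻¹ * x = x * a⁻¹ := h2a.inv_left
    have h1 : a⁻¹ * (x * g) * a = x * (a⁻¹ * g * a) := by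
      rw [← mul_assoc, hax]
      group
    simp only [List.map_cons, List.prod_cons,
      ih (fun b hb => h b (List.mem_cons_of_mem a hb))
         (fun b hb => h2 b (List.mem_cons_of_mem a hb)), h1]
    rw [mul_assoc x, ← mul_assoc (a⁻¹ * g * a) (x ^ l.length), ← hxp,
      mul_assoc (x ^ l.length), ← mul_assoc x, ← pow_succ', List.length_cons]

theorem stmt3 {G : Type*} [Group G] [Finite G] (x y : G)
    (hxy : x * y = y * x) (hy : y ∈ Subgroup.centralizer ({x} : Set G))
    (m n : ℕ)
    (hm : m = genOrder (⟨y, hy⟩ : Subgroup.centralizer ({x} : Set G)))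
    (hn : n = genOrder (x ^ m)) :
    genOrder (x * y) ≤ n * m := by
  obtain ⟨hmpos, L, hLlen, hLprod⟩ :
      0 < m ∧ ∃ l : List (Subgroup.centralizer ({x} : Set G)), l.length = m ∧
        (l.map fun c => c⁻¹ * (⟨y, hy⟩ : Subgroup.centralizer ({x} : Set G)) * c).prod = 1 :=
    hm ▸ genOrder_spec _
  obtain ⟨hnpos, D, hDlen, hDprod⟩ :
      0 < n ∧ ∃ l : List G, l.length = n ∧
        (l.map fun d => d⁻¹ * (x ^ m) * d).prod = 1 := hn ▸ genOrder_spec _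
  have hcx : ∀ c : Subgroup.centralizer ({x} : Set G), (c : G) * x = x * c :=
    fun c => (c.2 x rfl).symm
  have hmemx : ∀ a ∈ L.map (fun c : Subgroup.centralizer ({x} : Set G) => (c : G)),
      a * x = x * a := by
    rintro a ha
    obtain ⟨c, -, rfl⟩ := List.mem_map.1 ha
    exact hcx c
  have hmemconj : ∀ a ∈ L.map (fun c : Subgroup.centralizer ({x} : Set G) => (c : G)),
      (a⁻¹ * y * a) * x = x * (a⁻¹ * y * a) := by
    rintro a ha
    obtain ⟨c, -, rfl⟩ := List.mem_map.1 ha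
    simpa using hcx (c⁻¹ * (⟨y, hy⟩ : Subgroup.centralizer ({x} : Set G)) * c)
  have hL'prod : (((L.map (fun c : Subgroup.centralizer ({x} : Set G) => (c : G))).map
      fun a => a⁻¹ * y * a)).prod = 1 := by
    have h0 : ((L.map (fun c : Subgroup.centralizer ({x} : Set G) => (c : G))).map
          fun a => a⁻¹ * y * a)
        = (L.map fun c => c⁻¹ * (⟨y, hy⟩ : Subgroup.centralizer ({x} : Set G)) * c).map
            (fun c : Subgroup.centralizer ({x} : Set G) => (c : G)) := by
      rw [List.map_map, List.map_map]
      rfl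
    rw [h0, ← SubmonoidClass.coe_list_prod, hLprod, OneMemClass.coe_one]
  have hLG : (((L.map (fun c : Subgroup.centralizer ({x} : Set G) => (c : G))).map
      fun a => a⁻¹ * (x * y) * a)).prod = x ^ m := by
    rw [prod_conj_mul x y _ hmemconj hmemx, hL'prod, mul_one, List.length_map, hLlen]
  refine genOrder_le _ _ (Nat.mul_pos hnpos hmpos)
    ((D.map fun d => (L.map (fun c : Subgroup.centralizer ({x} : Set G) => (c : G))).map
      fun a => a * d).flatten) ?_ ?_
  · rw [List.length_flatten, List.map_map]
    have h1 : (List.map (List.length ∘ fun d =>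
        (L.map (fun c : Subgroup.centralizer ({x} : Set G) => (c : G))).map fun a => a * d) D)
        = List.map (fun _ => m) D := by
      refine List.map_congr_left fun d _ => ?_
      simp [hLlen]
    rw [h1, List.map_const', List.sum_replicate, smul_eq_mul, hDlen, Nat.mul_comm]
  · rw [List.map_flatten, List.map_map, List.prod_flatten]
    have h2 : (List.map ((fun l => List.map (fun a => a⁻¹ * (x * y) * a) l) ∘
        fun d => (L.map (fun c : Subgroup.centralizer ({x} : Set G) => (c : G))).map
          fun a => a * d) D).map List.prod
        = D.map (fun d => d⁻¹ * x ^ m * d) := by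
      rw [List.map_map]
      refine List.map_congr_left fun d _ => ?_
      have h4 := conj_prod_shift (x * y) d
        (L.map (fun c : Subgroup.centralizer ({x} : Set G) => (c : G)))
      rw [hLG] at h4
      simp only [List.map_map, Function.comp_def, mul_inv_rev, mul_assoc] at h4 ⊢
      exact h4
    rw [h2, hDprod]
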